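/- Let Γ be a finitely generated free abelian group and ω : Γ → ℝ an injective homomorphism. Let Λ_ω^+ be the set of functions λ : Γ → ℂ supported on {γ : −ω(γ) > 0} with the Novikov finiteness property, and let exp : Λ_ω^+ → 1 + Λ_ω^+ be the convolution exponential. Suppose λ ∈ Λ_ω^+ and exp(λ) ∈ L¹_η for some homomorphism η : Γ → ℂ. Then there exists t₀ ∈ ℝ such that λ ∈ Λ_ω ∩ L¹_{η+tω} for all t ≥ t₀. -/

import Mathlib

/-- Convolution product on functions `Γ → ℂ` for an additive group `Γ`. -/
noncomputable def aconv {Γ : Type*} [AddCommGroup Γ] (a b : Γ → ℂ) : Γ → ℂ :=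
  fun ρ => ∑' σ : Γ, a σ * b (ρ - σ)

/-- The convolution unit: the delta function at `0`. -/
noncomputable def aone {Γ : Type*} [AddCommGroup Γ] [DecidableEq Γ] : Γ → ℂ :=
  fun γ => if γ = 0 then 1 else 0

/-- Convolution powers. -/
noncomputable def aconvPow {Γ : Type*} [AddCommGroup Γ] [DecidableEq Γ]
    (l : Γ → ℂ) : ℕ → (Γ → ℂ)
  | 0 => aone
  | (n + 1) => aconv l (aconvPow l n)

/-- The convolution exponential `exp(l) = Σ_k l^{*k} / k!`. -/
noncomputable def aexp {Γ : Type*} [AddCommGroup Γ] [DecidableEq Γ] (l : Γ → ℂ) : Γ → ℂ :=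
  fun γ => ∑' k : ℕ, ((Nat.factorial k : ℂ))⁻¹ * aconvPow l k γ

/-- The Novikov condition: `{γ : l γ ≠ 0, -ω(γ) ≤ K}` is finite for all `K`. -/
def Novikov {Γ : Type*} (ω : Γ → ℝ) (l : Γ → ℂ) : Prop :=
  ∀ K : ℝ, {γ : Γ | l γ ≠ 0 ∧ -ω γ ≤ K}.Finite

open scoped ENNReal NNReal
set_option linter.unusedSectionVars false
set_option linter.unusedVariables false
namespace Stmt9Aux

variable {Γ : Type*} [AddCommGroup Γ] [DecidableEq Γ]

lemma exists_ne_zero_of_tsum_ne_zero {β : Type*} {f : β → ℂ} (h : ∑' b, f b ≠ 0) :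
    ∃ b, f b ≠ 0 := by
  by_contra hc
  push_neg at hc
  exact h (by simp [funext hc])

/-- weighted-by-`-ω` version of `l`. -/
noncomputable def dl (ω : Γ →+ ℝ) (l : Γ → ℂ) : Γ → ℂ := fun σ => ((-ω σ : ℝ) : ℂ) * l σ

variable {ω : Γ →+ ℝ} {l : Γ → ℂ} {δ : ℝ}

/-- convolution against `l`-supported `d` is a finite sum. -/
lemma conv_eq_sum (hlN : Novikov ω l) (d a : Γ → ℂ) (hd : ∀ σ, d σ ≠ 0 → l σ ≠ 0)
    (h0 : ∀ τ, a τ ≠ 0 → 0 ≤ -ω τ) (γ : Γ) :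
    aconv d a γ = ∑ σ ∈ (hlN (-ω γ)).toFinset, d σ * a (γ - σ) := by
  apply tsum_eq_sum
  intro σ hσ
  rw [Set.Finite.mem_toFinset, Set.mem_setOf_eq] at hσ
  push_neg at hσ
  by_cases hdσ : d σ = 0
  · simp [hdσ]
  · have hlσ := hd σ hdσ
    have h2 : a (γ - σ) = 0 := by
      by_contra hcon
      have h3 := h0 _ hcon
      rw [map_sub] at h3
      linarith [hσ hlσ]
    simp [h2]

lemma conv_supp (hl : ∀ γ, l γ ≠ 0 → δ ≤ -ω γ) (d a : Γ → ℂ) (c : ℝ)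
    (hd : ∀ σ, d σ ≠ 0 → δ ≤ -ω σ)
    (h0 : ∀ τ, a τ ≠ 0 → c ≤ -ω τ) (γ : Γ) (h : aconv d a γ ≠ 0) : δ + c ≤ -ω γ := by
  obtain ⟨σ, hσ⟩ := exists_ne_zero_of_tsum_ne_zero h
  have hd0 : d σ ≠ 0 := fun h' => hσ (by simp [h'])
  have ha0 : a (γ - σ) ≠ 0 := fun h' => hσ (by simp [h'])
  have h1 := hd σ hd0
  have h2 := h0 _ ha0
  rw [map_sub] at h2
  linarith

lemma pow_supp (hl : ∀ γ, l γ ≠ 0 → δ ≤ -ω γ) :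
    ∀ (k : ℕ) (γ : Γ), aconvPow l k γ ≠ 0 → (k : ℝ) * δ ≤ -ω γ := by
  intro k
  induction k with
  | zero =>
    intro γ h
    have : γ = 0 := by
      by_contra hc
      exact h (by simp [aconvPow, aone, hc])
    simp [this]
  | succ n ih =>
    intro γ h
    have := conv_supp hl l (aconvPow l n) ((n : ℝ) * δ) hl ih γ h
    push_cast
    linarith

lemma pow_supp0 (hδ : 0 < δ) (hl : ∀ γ, l γ ≠ 0 → δ ≤ -ω γ) (k : ℕ) (γ : Γ)
    (h : aconvPow l k γ ≠ 0) : 0 ≤ -ω γ := by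
  have h1 := pow_supp hl k γ h
  have h2 : (0:ℝ) ≤ (k:ℝ) * δ := by positivity
  linarith

lemma dl_supp (σ : Γ) (h : dl ω l σ ≠ 0) : l σ ≠ 0 :=
  fun h' => h (by simp [dl, h'])

lemma conv_aone (d : Γ → ℂ) (γ : Γ) : aconv d aone γ = d γ := by
  unfold aconv
  rw [tsum_eq_single γ]
  · simp [aone]
  · intro σ hσ
    have h2 : γ - σ ≠ 0 := fun h => hσ (sub_eq_zero.mp h).symm
    simp [aone, h2]

lemma conv_smul (x y : Γ → ℂ) (c : ℂ) (γ : Γ) :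
    aconv x (fun τ => c * y τ) γ = c * aconv x y γ := by
  unfold aconv
  rw [← tsum_mul_left]
  congr 1
  funext σ
  ring

/-- the derivation property of multiplication by `-ω`. -/
lemma deriv_conv (hlN : Novikov ω l) (a : Γ → ℂ)
    (h0 : ∀ τ, a τ ≠ 0 → 0 ≤ -ω τ) (γ : Γ) :
    ((-ω γ : ℝ) : ℂ) * aconv l a γ
      = aconv (dl ω l) a γ + aconv l (fun τ => ((-ω τ : ℝ) : ℂ) * a τ) γ := by
  rw [conv_eq_sum hlN l a (fun _ h => h) h0 γ,
      conv_eq_sum hlN (dl ω l) a (fun σ h => dl_supp σ h) h0 γ,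
      conv_eq_sum hlN l (fun τ => ((-ω τ : ℝ) : ℂ) * a τ) (fun _ h => h)
        (fun τ h => h0 τ (fun h' => h (by simp [h']))) γ,
      Finset.mul_sum, ← Finset.sum_add_distrib]
  apply Finset.sum_congr rfl
  intro σ _
  have hw : ω (γ - σ) = ω γ - ω σ := map_sub ω γ σ
  unfold dl
  rw [hw]
  push_cast
  ring

/-- inner convolution over a fixed big finset. -/
lemma inner_eq (hδ : 0 < δ) (hl : ∀ γ, l γ ≠ 0 → δ ≤ -ω γ) (hlN : Novikov ω l)
    (d a : Γ → ℂ) (hd : ∀ σ, d σ ≠ 0 → l σ ≠ 0)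
    (h0 : ∀ τ, a τ ≠ 0 → 0 ≤ -ω τ) (γ σ : Γ) (hσ : 0 ≤ -ω σ) :
    aconv d a (γ - σ) = ∑ τ ∈ (hlN (-ω γ)).toFinset, d τ * a (γ - σ - τ) := by
  apply tsum_eq_sum
  intro τ hτ
  rw [Set.Finite.mem_toFinset, Set.mem_setOf_eq] at hτ
  push_neg at hτ
  by_cases hdτ : d τ = 0
  · simp [hdτ]
  · have hlτ := hd τ hdτ
    have h1 : -ω γ < -ω τ := hτ hlτ
    have h2 : a (γ - σ - τ) = 0 := by
      by_contra hcon
      have h3 := h0 _ hcon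
      rw [map_sub, map_sub] at h3
      linarith
    simp [h2]

lemma commute_conv (hδ : 0 < δ) (hl : ∀ γ, l γ ≠ 0 → δ ≤ -ω γ) (hlN : Novikov ω l)
    (d a : Γ → ℂ) (hd : ∀ σ, d σ ≠ 0 → l σ ≠ 0)
    (h0 : ∀ τ, a τ ≠ 0 → 0 ≤ -ω τ) (γ : Γ) :
    aconv l (aconv d a) γ = aconv d (aconv l a) γ := by
  have hda_supp : ∀ τ, aconv d a τ ≠ 0 → 0 ≤ -ω τ := by
    intro τ h
    have := conv_supp hl d a 0 (fun σ hσ => hl σ (hd σ hσ)) h0 τ h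
    linarith
  have hla_supp : ∀ τ, aconv l a τ ≠ 0 → 0 ≤ -ω τ := by
    intro τ h
    have := conv_supp hl l a 0 hl h0 τ h
    linarith
  rw [conv_eq_sum hlN l (aconv d a) (fun _ h => h) hda_supp γ,
      conv_eq_sum hlN d (aconv l a) hd hla_supp γ]
  have hL : ∀ σ ∈ (hlN (-ω γ)).toFinset,
      l σ * aconv d a (γ - σ) = ∑ τ ∈ (hlN (-ω γ)).toFinset, l σ * (d τ * a (γ - σ - τ)) := by
    intro σ hσ
    rw [Set.Finite.mem_toFinset, Set.mem_setOf_eq] at hσ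
    have h1 : 0 ≤ -ω σ := le_trans (le_of_lt hδ) (hl σ hσ.1)
    rw [inner_eq hδ hl hlN d a hd h0 γ σ h1, Finset.mul_sum]
  have hR : ∀ τ ∈ (hlN (-ω γ)).toFinset,
      d τ * aconv l a (γ - τ) = ∑ σ ∈ (hlN (-ω γ)).toFinset, d τ * (l σ * a (γ - τ - σ)) := by
    intro τ hτ
    rw [Set.Finite.mem_toFinset, Set.mem_setOf_eq] at hτ
    have h1 : 0 ≤ -ω τ := le_trans (le_of_lt hδ) (hl τ hτ.1)
    rw [inner_eq hδ hl hlN l a (fun _ h => h) h0 γ τ h1, Finset.mul_sum]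
  rw [Finset.sum_congr rfl hL, Finset.sum_congr rfl hR, Finset.sum_comm]
  apply Finset.sum_congr rfl
  intro τ _
  apply Finset.sum_congr rfl
  intro σ _
  have : γ - σ - τ = γ - τ - σ := by abel
  rw [this]
  ring

lemma pow_deriv (hδ : 0 < δ) (hl : ∀ γ, l γ ≠ 0 → δ ≤ -ω γ) (hlN : Novikov ω l) :
    ∀ (k : ℕ) (γ : Γ), ((-ω γ : ℝ) : ℂ) * aconvPow l (k + 1) γ
      = ((k : ℂ) + 1) * aconv (dl ω l) (aconvPow l k) γ := by
  intro k
  induction k with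
  | zero =>
    intro γ
    simp only [Nat.cast_zero, aconvPow]
    rw [conv_aone, conv_aone]
    simp [dl]
  | succ n ih =>
    intro γ
    have hps : ∀ τ, aconvPow l (n + 1) τ ≠ 0 → 0 ≤ -ω τ := pow_supp0 hδ hl (n + 1)
    have h1 := deriv_conv hlN (aconvPow l (n + 1)) hps γ
    have h2 : (fun τ => ((-ω τ : ℝ) : ℂ) * aconvPow l (n + 1) τ)
        = fun τ => ((n : ℂ) + 1) * aconv (dl ω l) (aconvPow l n) τ := funext ih
    rw [show aconvPow l (n + 1 + 1) γ = aconv l (aconvPow l (n + 1)) γ from rfl, h1, h2,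
        conv_smul, commute_conv hδ hl hlN (dl ω l) (aconvPow l n) dl_supp
          (pow_supp0 hδ hl n) γ]
    show aconv (dl ω l) (aconvPow l (n+1)) γ
        + ((n : ℂ) + 1) * aconv (dl ω l) (aconvPow l (n+1)) γ = _
    push_cast
    ring

lemma aexp_eq_sum (hδ : 0 < δ) (hl : ∀ γ, l γ ≠ 0 → δ ≤ -ω γ) (γ : Γ) (M : ℕ)
    (hM : -ω γ < (M : ℝ) * δ) :
    aexp l γ = ∑ k ∈ Finset.range M, ((Nat.factorial k : ℂ))⁻¹ * aconvPow l k γ := by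
  apply tsum_eq_sum
  intro k hk
  rw [Finset.mem_range, not_lt] at hk
  have h1 : aconvPow l k γ = 0 := by
    by_contra hc
    have h2 := pow_supp hl k γ hc
    have h3 : (M : ℝ) * δ ≤ (k : ℝ) * δ := by
      apply mul_le_mul_of_nonneg_right _ (le_of_lt hδ)
      exact_mod_cast hk
    linarith
  simp [h1]

lemma exp_supp (hδ : 0 < δ) (hl : ∀ γ, l γ ≠ 0 → δ ≤ -ω γ) (τ : Γ)
    (h : aexp l τ ≠ 0) : 0 ≤ -ω τ := by
  obtain ⟨k, hk⟩ := exists_ne_zero_of_tsum_ne_zero h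
  have : aconvPow l k τ ≠ 0 := fun h' => hk (by simp [h'])
  exact pow_supp0 hδ hl k τ this

lemma exp_deriv (hδ : 0 < δ) (hl : ∀ γ, l γ ≠ 0 → δ ≤ -ω γ) (hlN : Novikov ω l) (γ : Γ) :
    ((-ω γ : ℝ) : ℂ) * aexp l γ = aconv (dl ω l) (aexp l) γ := by
  set M : ℕ := Nat.floor ((-ω γ) / δ) with hMdef
  have hM : -ω γ < ((M : ℝ) + 1) * δ := by
    have h1 : (-ω γ) / δ < (M : ℝ) + 1 := by
      exact_mod_cast Nat.lt_floor_add_one ((-ω γ) / δ)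
    calc -ω γ = ((-ω γ) / δ) * δ := by field_simp
    _ < ((M : ℝ) + 1) * δ := by
      apply mul_lt_mul_of_pos_right h1 hδ
  -- LHS
  have hLHS : ((-ω γ : ℝ) : ℂ) * aexp l γ
      = ∑ j ∈ Finset.range M, ((Nat.factorial j : ℂ))⁻¹ * aconv (dl ω l) (aconvPow l j) γ := by
    rw [aexp_eq_sum hδ hl γ (M + 1) (by push_cast; linarith), Finset.mul_sum,
        Finset.sum_range_succ']
    have hzero : ((-ω γ : ℝ) : ℂ) * (((Nat.factorial 0 : ℂ))⁻¹ * aconvPow l 0 γ) = 0 := by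
      by_cases hγ : γ = 0
      · simp [hγ]
      · have : aconvPow l 0 γ = 0 := by simp [aconvPow, aone, hγ]
        simp [this]
    rw [hzero, add_zero]
    apply Finset.sum_congr rfl
    intro j _
    rw [show ((-ω γ : ℝ) : ℂ) * (((Nat.factorial (j+1) : ℂ))⁻¹ * aconvPow l (j+1) γ)
        = ((Nat.factorial (j+1) : ℂ))⁻¹ * (((-ω γ : ℝ) : ℂ) * aconvPow l (j+1) γ) by ring,
      pow_deriv hδ hl hlN j γ]
    have hfac : (Nat.factorial (j+1) : ℂ) = ((j : ℂ) + 1) * (Nat.factorial j : ℂ) := by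
      rw [Nat.factorial_succ]; push_cast; ring
    have hne1 : ((j : ℂ) + 1) ≠ 0 := Nat.cast_add_one_ne_zero j
    have hne2 : (Nat.factorial j : ℂ) ≠ 0 := by
      exact_mod_cast Nat.cast_ne_zero.mpr (Nat.factorial_ne_zero j)
    rw [hfac]
    field_simp
  rw [hLHS, conv_eq_sum hlN (dl ω l) (aexp l) dl_supp (exp_supp hδ hl) γ]
  have hinner : ∀ σ ∈ (hlN (-ω γ)).toFinset,
      dl ω l σ * aexp l (γ - σ)
        = ∑ j ∈ Finset.range M, ((Nat.factorial j : ℂ))⁻¹ * (dl ω l σ * aconvPow l j (γ - σ)) := by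
    intro σ hσ
    rw [Set.Finite.mem_toFinset, Set.mem_setOf_eq] at hσ
    have hσδ : δ ≤ -ω σ := hl σ hσ.1
    have h2 : -ω (γ - σ) < (M : ℝ) * δ := by
      rw [map_sub]
      nlinarith [hM, hσδ]
    rw [aexp_eq_sum hδ hl (γ - σ) M h2, Finset.mul_sum]
    apply Finset.sum_congr rfl
    intro j _
    ring
  rw [Finset.sum_congr rfl hinner, Finset.sum_comm]
  apply Finset.sum_congr rfl
  intro j _
  rw [conv_eq_sum hlN (dl ω l) (aconvPow l j) dl_supp (pow_supp0 hδ hl j) γ, Finset.mul_sum]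

noncomputable def mu (l : Γ → ℂ) : Γ → ℂ := fun γ => aone γ - aexp l γ

lemma aexp_zero (hδ : 0 < δ) (hl : ∀ γ, l γ ≠ 0 → δ ≤ -ω γ) : aexp l (0 : Γ) = 1 := by
  rw [aexp_eq_sum hδ hl (0 : Γ) 1 (by simp [hδ])]
  simp [aconvPow, aone]

lemma mu_supp (hδ : 0 < δ) (hl : ∀ γ, l γ ≠ 0 → δ ≤ -ω γ) (τ : Γ)
    (h : mu l τ ≠ 0) : δ ≤ -ω τ := by
  by_cases hτ : τ = 0
  · exfalso
    apply h
    rw [hτ]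
    simp [mu, aone, aexp_zero hδ hl]
  · have h1 : aexp l τ ≠ 0 := by
      intro h'
      exact h (by simp [mu, aone, hτ, h'])
    obtain ⟨k, hk⟩ := exists_ne_zero_of_tsum_ne_zero h1
    have h2 : aconvPow l k τ ≠ 0 := fun h' => hk (by simp [h'])
    have h3 : k ≠ 0 := by
      intro h'
      rw [h'] at h2
      exact h2 (by simp [aconvPow, aone, hτ])
    have h4 := pow_supp hl k τ h2
    have h5 : (1 : ℝ) ≤ (k : ℝ) := by exact_mod_cast Nat.one_le_iff_ne_zero.mpr h3
    nlinarith

lemma mu_supp0 (hδ : 0 < δ) (hl : ∀ γ, l γ ≠ 0 → δ ≤ -ω γ) (τ : Γ)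
    (h : mu l τ ≠ 0) : 0 ≤ -ω τ := le_trans (le_of_lt hδ) (mu_supp hδ hl τ h)

lemma key_identity (hδ : 0 < δ) (hl : ∀ γ, l γ ≠ 0 → δ ≤ -ω γ) (hlN : Novikov ω l) (γ : Γ) :
    dl ω l γ = aconv (dl ω l) (mu l) γ - ((-ω γ : ℝ) : ℂ) * mu l γ := by
  have h1 := exp_deriv hδ hl hlN γ
  have hE : aexp l = fun τ => aone τ - mu l τ := by
    funext τ; simp [mu]
  have haone_supp : ∀ τ : Γ, aone τ ≠ 0 → 0 ≤ -ω τ := by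
    intro τ h
    have : τ = 0 := by
      by_contra hc; exact h (by simp [aone, hc])
    simp [this]
  have hsplit : aconv (dl ω l) (aexp l) γ = aconv (dl ω l) aone γ - aconv (dl ω l) (mu l) γ := by
    rw [conv_eq_sum hlN (dl ω l) (aexp l) dl_supp (exp_supp hδ hl) γ,
        conv_eq_sum hlN (dl ω l) aone dl_supp haone_supp γ,
        conv_eq_sum hlN (dl ω l) (mu l) dl_supp (mu_supp0 hδ hl) γ,
        ← Finset.sum_sub_distrib]
    apply Finset.sum_congr rfl
    intro σ _
    rw [hE]
    ring
  rw [hsplit, conv_aone] at h1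
  have hzero : ((-ω γ : ℝ) : ℂ) * aone γ = 0 := by
    by_cases hγ : γ = 0
    · simp [hγ]
    · simp [aone, hγ]
  have h2 : ((-ω γ : ℝ) : ℂ) * aexp l γ = -(((-ω γ : ℝ) : ℂ) * mu l γ) := by
    rw [hE]
    simp only []
    rw [mul_sub, hzero]
    ring
  rw [h2] at h1
  linear_combination -h1

lemma norm_key (hδ : 0 < δ) (hl : ∀ γ, l γ ≠ 0 → δ ≤ -ω γ) (hlN : Novikov ω l) (γ : Γ) :
    ‖dl ω l γ‖ ≤ (∑ σ ∈ (hlN (-ω γ)).toFinset, ‖dl ω l σ‖ * ‖mu l (γ - σ)‖)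
      + (-ω γ) * ‖mu l γ‖ := by
  rw [key_identity hδ hl hlN γ]
  have h1 : ‖aconv (dl ω l) (mu l) γ - ((-ω γ : ℝ) : ℂ) * mu l γ‖
      ≤ ‖aconv (dl ω l) (mu l) γ‖ + ‖((-ω γ : ℝ) : ℂ) * mu l γ‖ := norm_sub_le _ _
  have h2 : ‖aconv (dl ω l) (mu l) γ‖
      ≤ ∑ σ ∈ (hlN (-ω γ)).toFinset, ‖dl ω l σ‖ * ‖mu l (γ - σ)‖ := by
    rw [conv_eq_sum hlN (dl ω l) (mu l) dl_supp (mu_supp0 hδ hl) γ]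
    refine le_trans (norm_sum_le _ _) ?_
    apply Finset.sum_le_sum
    intro σ _
    rw [norm_mul]
  have h3 : ‖((-ω γ : ℝ) : ℂ) * mu l γ‖ = (-ω γ) * ‖mu l γ‖ ∨ mu l γ = 0 := by
    by_cases hμ : mu l γ = 0
    · right; exact hμ
    · left
      rw [norm_mul, Complex.norm_real, Real.norm_eq_abs,
          abs_of_nonneg (mu_supp0 hδ hl γ hμ)]
  rcases h3 with h3 | h3
  · linarith
  · rw [h3] at h1 ⊢
    simp only [norm_zero, mul_zero] at h1 ⊢
    linarith

end Stmt9Aux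


open Stmt9Aux

lemma ofReal_norm_eq_coe_nnnorm {E : Type*} [SeminormedAddCommGroup E] (a : E) :
    ENNReal.ofReal ‖a‖ = (‖a‖₊ : ℝ≥0∞) := ENNReal.ofReal_eq_coe_nnreal _

/-- If `l ∈ Λ_ω⁺` and `exp(l) ∈ L¹_η`, then `l ∈ Λ_ω ∩ L¹_{η + tω}` for all sufficiently
large `t`. -/
theorem stmt_9 {Γ : Type*} [AddCommGroup Γ] [DecidableEq Γ]
    [Module.Free ℤ Γ] [Module.Finite ℤ Γ]
    (ω : Γ →+ ℝ) (hω : Function.Injective ω) (η : Γ →+ ℂ)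
    (l : Γ → ℂ) (hlN : Novikov ω l)
    (hsupp : ∀ γ : Γ, l γ ≠ 0 → 0 < -ω γ)
    (hexp : Summable fun γ => ‖aexp l γ * Complex.exp (η γ)‖) :
    ∃ t₀ : ℝ, ∀ t : ℝ, t₀ ≤ t →
      Summable fun γ => ‖l γ * Complex.exp (η γ + (t : ℂ) * (ω γ : ℂ))‖ := by
  classical
  by_cases htriv : ∀ γ : Γ, l γ = 0
  · refine ⟨0, fun t _ => ?_⟩
    have : (fun γ : Γ => ‖l γ * Complex.exp (η γ + (t : ℂ) * (ω γ : ℂ))‖) = fun _ => 0 := by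
      funext γ; simp [htriv γ]
    rw [this]
    exact summable_zero
  push_neg at htriv
  obtain ⟨γ₀, hγ₀⟩ := htriv
  -- the minimal level δ
  have hS : γ₀ ∈ (hlN (-ω γ₀)).toFinset := by
    rw [Set.Finite.mem_toFinset]; exact ⟨hγ₀, le_refl _⟩
  have hSne : (hlN (-ω γ₀)).toFinset.Nonempty := ⟨γ₀, hS⟩
  set δ := (hlN (-ω γ₀)).toFinset.inf' hSne (fun γ => -ω γ) with hδdef
  have hδ : 0 < δ := by
    rw [hδdef, Finset.lt_inf'_iff]
    intro γ hγ
    rw [Set.Finite.mem_toFinset] at hγ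
    exact hsupp γ hγ.1
  have hl : ∀ γ, l γ ≠ 0 → δ ≤ -ω γ := by
    intro γ hγ
    by_cases hc : -ω γ ≤ -ω γ₀
    · exact Finset.inf'_le _ (by rw [Set.Finite.mem_toFinset]; exact ⟨hγ, hc⟩)
    · push_neg at hc
      have h2 := Finset.inf'_le (fun γ => -ω γ) hS
      rw [← hδdef] at h2
      linarith
  -- summability of μ at weight η
  have hmuSum : Summable (fun γ => ‖mu l γ * Complex.exp (η γ)‖) := by
    have h1 : Summable (fun γ => ‖aone γ * Complex.exp (η γ)‖) := by
      apply summable_of_ne_finset_zero (s := ({0} : Finset Γ))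
      intro γ hγ
      rw [Finset.mem_singleton] at hγ
      simp [aone, hγ]
    apply Summable.of_nonneg_of_le (fun γ => norm_nonneg _) _ (h1.add hexp)
    intro γ
    show ‖(aone γ - aexp l γ) * Complex.exp (η γ)‖ ≤ _
    rw [sub_mul]
    exact norm_sub_le _ _
  have hmuSumNN : Summable (fun γ => ‖mu l γ * Complex.exp (η γ)‖₊) := by
    rw [← NNReal.summable_coe]
    simpa using hmuSum
  set Cen : ℝ≥0∞ := ∑' γ, (‖mu l γ * Complex.exp (η γ)‖₊ : ℝ≥0∞) with hCdef
  have hCtop : Cen ≠ ⊤ := ENNReal.tsum_coe_ne_top_iff_summable.mpr hmuSumNN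
  set Cr : ℝ := Cen.toReal with hCrdef
  have hCr0 : 0 ≤ Cr := ENNReal.toReal_nonneg
  refine ⟨max 1 (Real.log (2 * (Cr + 1)) / δ), fun t ht => ?_⟩
  have ht1 : (1 : ℝ) ≤ t := le_trans (le_max_left _ _) ht
  have ht0 : (0 : ℝ) < t := by linarith
  have ht2 : Real.log (2 * (Cr + 1)) ≤ t * δ := by
    have := le_trans (le_max_right _ _) ht
    rw [div_le_iff₀ hδ] at this
    linarith
  -- weights
  set W : Γ → ℝ≥0∞ := fun γ => (‖Complex.exp (η γ + (t : ℂ) * (ω γ : ℂ))‖₊ : ℝ≥0∞) with hWdef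
  have hWval : ∀ γ, W γ = ENNReal.ofReal (Real.exp ((η γ).re + t * ω γ)) := by
    intro γ
    simp only [hWdef]
    rw [← ofReal_norm_eq_coe_nnnorm]
    congr 1
    rw [Complex.norm_exp]
    congr 1
    simp [Complex.add_re, Complex.mul_re]
  have hWmul : ∀ σ τ : Γ, W (σ + τ) = W σ * W τ := by
    intro σ τ
    rw [hWval, hWval, hWval, ← ENNReal.ofReal_mul (Real.exp_nonneg _), ← Real.exp_add]
    congr 2
    rw [map_add, map_add]
    simp [Complex.add_re]
    ring
  set A : Γ → ℝ≥0∞ := fun γ => (‖dl ω l γ‖₊ : ℝ≥0∞) * W γ with hAdef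
  set B : Γ → ℝ≥0∞ := fun γ => (‖mu l γ‖₊ : ℝ≥0∞) * W γ with hBdef
  set B' : Γ → ℝ≥0∞ := fun γ => ENNReal.ofReal (-ω γ) * B γ with hB'def
  -- basic W decomposition on the support of μ
  have hWsplit : ∀ γ, W γ = ENNReal.ofReal (Real.exp ((η γ).re)) *
      ENNReal.ofReal (Real.exp (t * ω γ)) := by
    intro γ
    rw [hWval, ← ENNReal.ofReal_mul (Real.exp_nonneg _), ← Real.exp_add]
  have hMuW : ∀ γ, (‖mu l γ‖₊ : ℝ≥0∞) * ENNReal.ofReal (Real.exp ((η γ).re))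
      = (‖mu l γ * Complex.exp (η γ)‖₊ : ℝ≥0∞) := by
    intro γ
    rw [← ofReal_norm_eq_coe_nnnorm, ← ofReal_norm_eq_coe_nnnorm,
        ← ENNReal.ofReal_mul (norm_nonneg _)]
    congr 1
    rw [norm_mul, Complex.norm_exp]
  -- bound on ∑ B
  have hBsum : ∑' γ, B γ ≤ ENNReal.ofReal (Real.exp (-(t * δ))) * Cen := by
    rw [hCdef, ← ENNReal.tsum_mul_left]
    apply ENNReal.tsum_le_tsum
    intro γ
    by_cases hμ : mu l γ = 0
    · simp [hBdef, hμ]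
    · have hv : δ ≤ -ω γ := mu_supp hδ hl γ hμ
      have hle : Real.exp (t * ω γ) ≤ Real.exp (-(t * δ)) := by
        apply Real.exp_le_exp.mpr
        nlinarith
      calc B γ = ((‖mu l γ‖₊ : ℝ≥0∞) * ENNReal.ofReal (Real.exp ((η γ).re))) *
          ENNReal.ofReal (Real.exp (t * ω γ)) := by
            simp only [hBdef]; rw [hWsplit γ]; ring
      _ = (‖mu l γ * Complex.exp (η γ)‖₊ : ℝ≥0∞) * ENNReal.ofReal (Real.exp (t * ω γ)) := by
            rw [hMuW γ]
      _ ≤ (‖mu l γ * Complex.exp (η γ)‖₊ : ℝ≥0∞) * ENNReal.ofReal (Real.exp (-(t * δ))) := by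
            exact mul_le_mul_right (ENNReal.ofReal_le_ofReal hle) _
      _ = ENNReal.ofReal (Real.exp (-(t * δ))) * (‖mu l γ * Complex.exp (η γ)‖₊ : ℝ≥0∞) := by
            ring
  have hBhalf : ∑' γ, B γ ≤ ENNReal.ofReal (1/2) := by
    refine le_trans hBsum ?_
    have h1 : Real.exp (-(t * δ)) ≤ (2 * (Cr + 1))⁻¹ := by
      rw [← Real.exp_log (by positivity : (0:ℝ) < (2 * (Cr + 1))⁻¹)]
      apply Real.exp_le_exp.mpr
      rw [Real.log_inv]
      linarith
    have h2 : Cen = ENNReal.ofReal Cr := (ENNReal.ofReal_toReal hCtop).symm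
    rw [h2, ← ENNReal.ofReal_mul (Real.exp_nonneg _)]
    apply ENNReal.ofReal_le_ofReal
    have h3 : Real.exp (-(t * δ)) * Cr ≤ (2 * (Cr + 1))⁻¹ * Cr := by
      apply mul_le_mul_of_nonneg_right h1 hCr0
    have h4 : (2 * (Cr + 1))⁻¹ * Cr ≤ 1/2 := by
      rw [inv_mul_le_iff₀ (by positivity)]
      nlinarith
    linarith
  -- bound on ∑ B'
  have hB'sum : ∑' γ, B' γ ≤ Cen := by
    rw [hCdef]
    apply ENNReal.tsum_le_tsum
    intro γ
    by_cases hμ : mu l γ = 0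
    · simp [hB'def, hBdef, hμ]
    · have hv : δ ≤ -ω γ := mu_supp hδ hl γ hμ
      have hv0 : 0 ≤ -ω γ := le_trans (le_of_lt hδ) hv
      have hkey : (-ω γ) * Real.exp (t * ω γ) ≤ 1 := by
        have h1 : Real.exp (t * ω γ) ≤ Real.exp (ω γ) := by
          apply Real.exp_le_exp.mpr
          nlinarith
        have h2 : (-ω γ) ≤ Real.exp (-ω γ) := by
          linarith [Real.add_one_le_exp (-ω γ)]
        have h3 : Real.exp (ω γ) * Real.exp (-ω γ) = 1 := by
          rw [← Real.exp_add]; simp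
        nlinarith [Real.exp_pos (ω γ), Real.exp_pos (t * ω γ), Real.exp_nonneg (-ω γ)]
      calc B' γ = ((‖mu l γ‖₊ : ℝ≥0∞) * ENNReal.ofReal (Real.exp ((η γ).re))) *
          (ENNReal.ofReal (-ω γ) * ENNReal.ofReal (Real.exp (t * ω γ))) := by
            rw [hB'def]; simp only []; simp only [hBdef]; rw [hWsplit γ]; ring
      _ ≤ ((‖mu l γ‖₊ : ℝ≥0∞) * ENNReal.ofReal (Real.exp ((η γ).re))) * 1 := by
            apply mul_le_mul_right
            rw [← ENNReal.ofReal_mul hv0]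
            exact le_trans (ENNReal.ofReal_le_ofReal hkey) (by simp)
      _ = (‖mu l γ * Complex.exp (η γ)‖₊ : ℝ≥0∞) := by rw [mul_one, hMuW γ]
  -- the main inductive bound
  have hmain : ∀ K : ℝ, ∑' γ, (if -ω γ ≤ K then A γ else 0) ≤ 2 * Cen := by
    intro K
    set AK : Γ → ℝ≥0∞ := fun γ => if -ω γ ≤ K then A γ else 0 with hAKdef
    have hAne : ∀ γ, A γ ≠ ⊤ := by
      intro γ
      simp only [hAdef]
      exact ENNReal.mul_ne_top ENNReal.coe_ne_top ENNReal.coe_ne_top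
    have hAKfin : ∑' γ, AK γ ≠ ⊤ := by
      have heq : ∑' γ, AK γ = ∑ γ ∈ (hlN K).toFinset, AK γ := by
        apply tsum_eq_sum
        intro γ hγ
        rw [Set.Finite.mem_toFinset, Set.mem_setOf_eq] at hγ
        push_neg at hγ
        by_cases hlγ : l γ = 0
        · have : dl ω l γ = 0 := by simp [dl, hlγ]
          simp [hAKdef, hAdef, this]
        · simp only [hAKdef]
          rw [if_neg (by push_neg; exact hγ hlγ)]
      rw [heq]
      apply (ENNReal.sum_lt_top.mpr ?_).ne
      intro γ _
      simp only [hAKdef]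
      split
      · exact (hAne γ).lt_top
      · exact ENNReal.zero_lt_top
    -- pointwise step
    have hstep : ∀ γ, -ω γ ≤ K → A γ ≤ (∑' σ, AK σ * B (γ - σ)) + B' γ := by
      intro γ hγK
      have hnk := norm_key hδ hl hlN γ
      have hterm2 : (0:ℝ) ≤ (-ω γ) * ‖mu l γ‖ := by
        by_cases hμ : mu l γ = 0
        · simp [hμ]
        · have := mu_supp0 hδ hl γ hμ
          positivity
      have h1 : (‖dl ω l γ‖₊ : ℝ≥0∞)
          ≤ ENNReal.ofReal (∑ σ ∈ (hlN (-ω γ)).toFinset, ‖dl ω l σ‖ * ‖mu l (γ - σ)‖)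
            + ENNReal.ofReal ((-ω γ) * ‖mu l γ‖) := by
        rw [← ENNReal.ofReal_add (Finset.sum_nonneg (fun _ _ => by positivity)) hterm2,
            ← ofReal_norm_eq_coe_nnnorm]
        exact ENNReal.ofReal_le_ofReal hnk
      have h2 : ENNReal.ofReal (∑ σ ∈ (hlN (-ω γ)).toFinset, ‖dl ω l σ‖ * ‖mu l (γ - σ)‖)
          = ∑ σ ∈ (hlN (-ω γ)).toFinset,
              (‖dl ω l σ‖₊ : ℝ≥0∞) * (‖mu l (γ - σ)‖₊ : ℝ≥0∞) := by
        rw [ENNReal.ofReal_sum_of_nonneg (fun σ _ => by positivity)]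
        apply Finset.sum_congr rfl
        intro σ _
        rw [ENNReal.ofReal_mul (norm_nonneg _), ofReal_norm_eq_coe_nnnorm,
            ofReal_norm_eq_coe_nnnorm]
      have h3 : A γ ≤ (∑ σ ∈ (hlN (-ω γ)).toFinset,
            (‖dl ω l σ‖₊ : ℝ≥0∞) * (‖mu l (γ - σ)‖₊ : ℝ≥0∞)) * W γ
          + ENNReal.ofReal ((-ω γ) * ‖mu l γ‖) * W γ := by
        simp only [hAdef]
        calc (‖dl ω l γ‖₊ : ℝ≥0∞) * W γ
            ≤ (ENNReal.ofReal (∑ σ ∈ (hlN (-ω γ)).toFinset, ‖dl ω l σ‖ * ‖mu l (γ - σ)‖)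
              + ENNReal.ofReal ((-ω γ) * ‖mu l γ‖)) * W γ := mul_le_mul_left h1 _
        _ = _ := by rw [h2, add_mul]
      have h4 : ENNReal.ofReal ((-ω γ) * ‖mu l γ‖) * W γ ≤ B' γ := by
        by_cases hμ : mu l γ = 0
        · simp [hμ]
        · have hv0 : 0 ≤ -ω γ := mu_supp0 hδ hl γ hμ
          apply le_of_eq
          rw [ENNReal.ofReal_mul hv0, ofReal_norm_eq_coe_nnnorm]
          simp only [hB'def, hBdef]
          ring
      have h5 : (∑ σ ∈ (hlN (-ω γ)).toFinset,
            (‖dl ω l σ‖₊ : ℝ≥0∞) * (‖mu l (γ - σ)‖₊ : ℝ≥0∞)) * W γ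
          ≤ ∑' σ, AK σ * B (γ - σ) := by
        rw [Finset.sum_mul]
        refine le_trans (Finset.sum_le_sum ?_)
          (Summable.sum_le_tsum _ (fun _ _ => zero_le) ENNReal.summable)
        intro σ _
        by_cases hdlσ : dl ω l σ = 0
        · simp [hdlσ]
        by_cases hμσ : mu l (γ - σ) = 0
        · simp [hμσ, hBdef]
        have hWγ : W γ = W σ * W (γ - σ) := by
          rw [← hWmul σ (γ - σ)]
          congr 1
          abel
        have hμv : δ ≤ -ω (γ - σ) := mu_supp hδ hl _ hμσ
        have hσK : -ω σ ≤ K := by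
          rw [map_sub] at hμv
          linarith
        have hAKσ : AK σ = A σ := by
          simp only [hAKdef]
          rw [if_pos hσK]
        apply le_of_eq
        rw [hAKσ]
        simp only [hAdef, hBdef]
        rw [hWγ]
        ring
      exact le_trans h3 (add_le_add h5 h4)
    -- summing the pointwise step
    have hsum : ∑' γ, AK γ ≤ (∑' γ, AK γ) * (∑' γ, B γ) + ∑' γ, B' γ := by
      calc ∑' γ, AK γ ≤ ∑' γ, ((∑' σ, AK σ * B (γ - σ)) + B' γ) := by
            apply ENNReal.tsum_le_tsum
            intro γ
            simp only [hAKdef]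
            split
            · exact hstep γ (by assumption)
            · exact zero_le
      _ = (∑' γ, ∑' σ, AK σ * B (γ - σ)) + ∑' γ, B' γ := ENNReal.tsum_add
      _ = (∑' σ, ∑' γ, AK σ * B (γ - σ)) + ∑' γ, B' γ := by rw [ENNReal.tsum_comm]
      _ = (∑' σ, AK σ * ∑' γ, B (γ - σ)) + ∑' γ, B' γ := by
            congr 1
            apply tsum_congr
            intro σ
            exact ENNReal.tsum_mul_left
      _ = (∑' σ, AK σ * ∑' γ, B γ) + ∑' γ, B' γ := by
            congr 1
            apply tsum_congr
            intro σ
            congr 1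
            exact (Equiv.subRight σ).tsum_eq B
      _ = (∑' γ, AK γ) * (∑' γ, B γ) + ∑' γ, B' γ := by rw [ENNReal.tsum_mul_right]
    -- arithmetic
    have h6 : ∑' γ, AK γ ≤ (∑' γ, AK γ) * ENNReal.ofReal (1/2) + Cen :=
      le_trans hsum (add_le_add (mul_le_mul_right hBhalf _) hB'sum)
    have h7 : ((∑' γ, AK γ) * ENNReal.ofReal (1/2) + Cen) ≠ ⊤ :=
      ENNReal.add_ne_top.mpr ⟨ENNReal.mul_ne_top hAKfin ENNReal.ofReal_ne_top, hCtop⟩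
    have hxr : (∑' γ, AK γ).toReal ≤ (∑' γ, AK γ).toReal * (1/2) + Cr := by
      have h8 := ENNReal.toReal_mono h7 h6
      rw [ENNReal.toReal_add (ENNReal.mul_ne_top hAKfin ENNReal.ofReal_ne_top) hCtop,
          ENNReal.toReal_mul, ENNReal.toReal_ofReal (by norm_num)] at h8
      exact h8
    have hxr2 : (∑' γ, AK γ).toReal ≤ 2 * Cr := by linarith
    calc ∑' γ, AK γ = ENNReal.ofReal ((∑' γ, AK γ).toReal) :=
          (ENNReal.ofReal_toReal hAKfin).symm
    _ ≤ ENNReal.ofReal (2 * Cr) := ENNReal.ofReal_le_ofReal hxr2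
    _ = 2 * Cen := by
          rw [ENNReal.ofReal_mul (by norm_num), ENNReal.ofReal_toReal hCtop]
          norm_num
  -- bound the full sum of A
  have hA : ∑' γ, A γ ≤ 2 * Cen := by
    rw [ENNReal.tsum_eq_iSup_sum]
    apply iSup_le
    intro s
    set K : ℝ := (insert (0:ℝ) (s.image fun γ => -ω γ)).max' (Finset.insert_nonempty _ _)
      with hKdef
    have h8 : ∑ γ ∈ s, A γ = ∑ γ ∈ s, (if -ω γ ≤ K then A γ else 0) := by
      apply Finset.sum_congr rfl
      intro γ hγ
      exact (if_pos (Finset.le_max' _ (-ω γ)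
        (Finset.mem_insert_of_mem (Finset.mem_image_of_mem (fun γ => -ω γ) hγ)))).symm
    rw [h8]
    exact le_trans (Summable.sum_le_tsum s (fun _ _ => zero_le) ENNReal.summable) (hmain K)
  -- conclude
  have hptfin : ∀ γ, (‖l γ * Complex.exp (η γ + (t:ℂ) * (ω γ : ℂ))‖₊ : ℝ≥0∞)
      ≤ ENNReal.ofReal δ⁻¹ * A γ := by
    intro γ
    by_cases hlγ : l γ = 0
    · simp [hlγ]
    · have hv := hl γ hlγ
      have hdlval : ‖dl ω l γ‖ = (-ω γ) * ‖l γ‖ := by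
        show ‖((-ω γ : ℝ) : ℂ) * l γ‖ = _
        rw [norm_mul, Complex.norm_real, Real.norm_eq_abs, abs_of_nonneg (by linarith)]
      have h9 : ‖l γ‖ ≤ δ⁻¹ * ‖dl ω l γ‖ := by
        rw [hdlval]
        have h10 : δ * ‖l γ‖ ≤ (-ω γ) * ‖l γ‖ :=
          mul_le_mul_of_nonneg_right hv (norm_nonneg _)
        have h11 : δ * δ⁻¹ = 1 := mul_inv_cancel₀ (ne_of_gt hδ)
        nlinarith [norm_nonneg (l γ), inv_nonneg.mpr (le_of_lt hδ)]
      calc (‖l γ * Complex.exp (η γ + (t:ℂ) * (ω γ : ℂ))‖₊ : ℝ≥0∞)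
          = (‖l γ‖₊ : ℝ≥0∞) * W γ := by
            simp only [hWdef]
            rw [nnnorm_mul, ENNReal.coe_mul]
      _ ≤ (ENNReal.ofReal δ⁻¹ * (‖dl ω l γ‖₊ : ℝ≥0∞)) * W γ := by
            apply mul_le_mul_left
            rw [← ofReal_norm_eq_coe_nnnorm, ← ofReal_norm_eq_coe_nnnorm,
                ← ENNReal.ofReal_mul (inv_nonneg.mpr (le_of_lt hδ))]
            exact ENNReal.ofReal_le_ofReal h9
      _ = ENNReal.ofReal δ⁻¹ * A γ := by
            simp only [hAdef]
            ring
  have htot : ∑' γ, (‖l γ * Complex.exp (η γ + (t:ℂ) * (ω γ : ℂ))‖₊ : ℝ≥0∞) ≠ ⊤ := by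
    have h12 : ∑' γ, (‖l γ * Complex.exp (η γ + (t:ℂ) * (ω γ : ℂ))‖₊ : ℝ≥0∞)
        ≤ ENNReal.ofReal δ⁻¹ * (2 * Cen) := by
      refine le_trans (ENNReal.tsum_le_tsum hptfin) ?_
      rw [ENNReal.tsum_mul_left]
      exact mul_le_mul_right hA _
    exact ne_top_of_le_ne_top
      (ENNReal.mul_ne_top ENNReal.ofReal_ne_top
        (ENNReal.mul_ne_top (by simp) hCtop)) h12
  have hsnn : Summable (fun γ => ‖l γ * Complex.exp (η γ + (t:ℂ) * (ω γ : ℂ))‖₊) :=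
    ENNReal.tsum_coe_ne_top_iff_summable.mp htot
  have := NNReal.summable_coe.mpr hsnn
  simpa using this
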